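/- For any functions f, g : {0,1}^n → {0,1} and any S ⊆ [n], ⟨f·g, χ_S⟩ = Σ_{T,T' ⊆ [n] : TΔT' ⊆ S ⊆ T∪T'} f̂(T)·ĝ(T') · ((1−2p)/√(p(1−p)))^{|S∩T∩T'|}, where TΔT' is the symmetric difference of T and T'. -/

import Mathlib

open Finset Real
open scoped symmDiff

noncomputable section

/-- The real value of a bit. -/
def bval (b : Bool) : ℝ := if b then 1 else 0

/-- The `p`-biased product measure on `{0,1}^n`, as a weight function. -/
def pw (n : ℕ) (p : ℝ) (x : Fin n → Bool) : ℝ := ∏ i, if x i then p else 1 - p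

/-- Expectation with respect to the `p`-biased measure. -/
def expect (n : ℕ) (p : ℝ) (f : (Fin n → Bool) → ℝ) : ℝ := ∑ x, pw n p x * f x

/-- Inner product `⟨f,g⟩ = E[f g]`. -/
def binner (n : ℕ) (p : ℝ) (f g : (Fin n → Bool) → ℝ) : ℝ := expect n p fun x => f x * g x

/-- The `p`-biased character `χ_S`. -/
def chi (n : ℕ) (p : ℝ) (S : Finset (Fin n)) (x : Fin n → Bool) : ℝ :=
  ∏ i ∈ S, (bval (x i) - p) / Real.sqrt (p * (1 - p))

/-- The Fourier–Walsh coefficient `f̂(S) = ⟨f, χ_S⟩`. -/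
def fhat (n : ℕ) (p : ℝ) (f : (Fin n → Bool) → ℝ) (S : Finset (Fin n)) : ℝ :=
  binner n p f (chi n p S)

/-- The discrete derivative `D_i f(x) = f(x^{i→1}) - f(x^{i→0})`. -/
def Dop (n : ℕ) (f : (Fin n → Bool) → ℝ) (i : Fin n) (x : Fin n → Bool) : ℝ :=
  f (Function.update x i true) - f (Function.update x i false)

/-- The influence `I_i(f) = P(f(X) ≠ f(R_i X))` where the `i`-th bit is resampled. -/
def influence (n : ℕ) (p : ℝ) (f : (Fin n → Bool) → ℝ) (i : Fin n) : ℝ :=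
  ∑ x, pw n p x *
    ∑ b : Bool, (if b then p else 1 - p) *
      (if f (Function.update x i b) ≠ f x then 1 else 0)

/-- The transition matrix `Q` of the jump chain of the `p`-biased random walk. -/
def Qmat (n : ℕ) (p : ℝ) (x y : Fin n → Bool) : ℝ :=
  if x = y then (1 / (n : ℝ)) * ∑ i, ((1 - p) * (1 - bval (x i)) + p * bval (x i))
  else if (Finset.univ.filter fun i => x i ≠ y i).card = 1 then
    (1 / (n : ℝ)) * ∑ i ∈ Finset.univ.filter (fun i => x i ≠ y i),
      (p * (1 - bval (x i)) + (1 - p) * bval (x i))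
  else 0

/-- `Q_{∂f}(x,y) = Q(x,y) · 1(f(x) ≠ f(y))`. -/
def Qdel (n : ℕ) (p : ℝ) (f : (Fin n → Bool) → ℝ) (x y : Fin n → Bool) : ℝ :=
  Qmat n p x y * (if f x ≠ f y then 1 else 0)

/-- `π^T M h = Σ_{x,y} π(x) M(x,y) h(y)`. -/
def pTMh (n : ℕ) (p : ℝ) (M : (Fin n → Bool) → (Fin n → Bool) → ℝ)
    (h : (Fin n → Bool) → ℝ) : ℝ :=
  ∑ x, ∑ y, pw n p x * M x y * h y

/-- `Q` as a matrix. -/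
def QM (n : ℕ) (p : ℝ) : Matrix (Fin n → Bool) (Fin n → Bool) ℝ :=
  Matrix.of fun x y => Qmat n p x y

/-- `Q_{∂f}` as a matrix. -/
def QdelM (n : ℕ) (p : ℝ) (f : (Fin n → Bool) → ℝ) :
    Matrix (Fin n → Bool) (Fin n → Bool) ℝ :=
  Matrix.of fun x y => Qdel n p f x y

/-- `π^T M h` for a matrix `M`. -/
def pTM (n : ℕ) (p : ℝ) (M : Matrix (Fin n → Bool) (Fin n → Bool) ℝ)
    (h : (Fin n → Bool) → ℝ) : ℝ :=
  ∑ x, ∑ y, pw n p x * M x y * h y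

end

noncomputable section ProductFourierAux

/-- Per-bit character value. -/
def phiB (p : ℝ) (b : Bool) : ℝ := (bval b - p) / Real.sqrt (p * (1 - p))

/-- Per-bit weight. -/
def wB (p : ℝ) (b : Bool) : ℝ := if b then p else 1 - p

variable {n : ℕ} {p : ℝ}

lemma chi_eq_prod (S : Finset (Fin n)) (x : Fin n → Bool) :
    chi n p S x = ∏ i ∈ S, phiB p (x i) := rfl

lemma pw_eq_prod (x : Fin n → Bool) : pw n p x = ∏ i, wB p (x i) := rfl

lemma binner_eq_sum (f g : (Fin n → Bool) → ℝ) :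
    binner n p f g = ∑ x, pw n p x * (f x * g x) := rfl

lemma sq_sqrt' (hp0 : 0 < p) (hp1 : p < 1) :
    Real.sqrt (p * (1 - p)) * Real.sqrt (p * (1 - p)) = p * (1 - p) :=
  Real.mul_self_sqrt (by nlinarith)

lemma sqrt_pos' (hp0 : 0 < p) (hp1 : p < 1) : 0 < Real.sqrt (p * (1 - p)) :=
  Real.sqrt_pos.mpr (by nlinarith)

lemma phiB_mul_add_one (hp0 : 0 < p) (hp1 : p < 1) (b b' : Bool) :
    phiB p b * phiB p b' + 1 = if b = b' then (wB p b)⁻¹ else 0 := by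
  have hs := sq_sqrt' hp0 hp1
  have hs0 := (sqrt_pos' hp0 hp1).ne'
  set s := Real.sqrt (p * (1 - p)) with hsd
  have h1 : p ≠ 0 := hp0.ne'
  have h2 : (1:ℝ) - p ≠ 0 := by linarith
  cases b <;> cases b' <;>
    simp only [phiB, wB, bval, if_true, if_false, Bool.false_eq_true, Bool.true_eq_false,
      ← hsd] <;>
    field_simp <;>
    first
      | linear_combination hs
      | linear_combination -p*hs
      | linear_combination (p-1)*hs

lemma bit_moment0 : ∑ b : Bool, wB p b = 1 := by simp [wB]

lemma bit_moment1 (hp0 : 0 < p) (hp1 : p < 1) :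
    ∑ b : Bool, wB p b * phiB p b = 0 := by
  have hs0 := (sqrt_pos' hp0 hp1).ne'
  set s := Real.sqrt (p * (1 - p)) with hsd
  simp only [Fintype.sum_bool, wB, phiB, bval, if_true, if_false, Bool.false_eq_true, ← hsd]
  field_simp
  ring

lemma bit_moment2 (hp0 : 0 < p) (hp1 : p < 1) :
    ∑ b : Bool, wB p b * (phiB p b * phiB p b) = 1 := by
  have hs := sq_sqrt' hp0 hp1
  have hs0 := (sqrt_pos' hp0 hp1).ne'
  set s := Real.sqrt (p * (1 - p)) with hsd
  simp only [Fintype.sum_bool, wB, phiB, bval, if_true, if_false, Bool.false_eq_true, ← hsd]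
  field_simp
  linear_combination -hs

lemma bit_moment3 (hp0 : 0 < p) (hp1 : p < 1) :
    ∑ b : Bool, wB p b * (phiB p b * phiB p b * phiB p b) =
      (1 - 2 * p) / Real.sqrt (p * (1 - p)) := by
  have hs := sq_sqrt' hp0 hp1
  have hs0 := (sqrt_pos' hp0 hp1).ne'
  set s := Real.sqrt (p * (1 - p)) with hsd
  simp only [Fintype.sum_bool, wB, phiB, bval, if_true, if_false, Bool.false_eq_true, ← hsd]
  field_simp
  linear_combination (2*p-1) * hs

lemma pw_pos (hp0 : 0 < p) (hp1 : p < 1) (x : Fin n → Bool) : 0 < pw n p x := by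
  refine Finset.prod_pos fun i _ => ?_
  by_cases h : x i <;> simp [h] <;> linarith

lemma sum_chi_mul_chi (hp0 : 0 < p) (hp1 : p < 1) (x y : Fin n → Bool) :
    ∑ T : Finset (Fin n), chi n p T x * chi n p T y =
      if x = y then (pw n p x)⁻¹ else 0 := by
  have h1 : ∀ T : Finset (Fin n), chi n p T x * chi n p T y =
      ∏ i ∈ T, (phiB p (x i) * phiB p (y i)) := by
    intro T; rw [chi_eq_prod, chi_eq_prod, ← Finset.prod_mul_distrib]
  simp only [h1]
  have h2 : ∑ T : Finset (Fin n), ∏ i ∈ T, (phiB p (x i) * phiB p (y i)) =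
      ∏ i, (phiB p (x i) * phiB p (y i) + 1) := by
    rw [Finset.prod_add, ← Finset.powerset_univ]
    exact Finset.sum_congr rfl fun T _ => by simp
  rw [h2]
  simp only [phiB_mul_add_one hp0 hp1]
  by_cases hxy : x = y
  · subst hxy
    simp only [eq_self_iff_true, if_true]
    rw [pw_eq_prod, ← Finset.prod_inv_distrib]
  · rw [if_neg hxy]
    obtain ⟨i, hi⟩ := Function.ne_iff.mp hxy
    exact Finset.prod_eq_zero (Finset.mem_univ i) (by simp [hi])

lemma fourier_expansion (hp0 : 0 < p) (hp1 : p < 1) (f : (Fin n → Bool) → ℝ)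
    (x : Fin n → Bool) :
    f x = ∑ T : Finset (Fin n), fhat n p f T * chi n p T x := by
  have hrw : ∀ T : Finset (Fin n),
      fhat n p f T = ∑ y, pw n p y * (f y * chi n p T y) := fun T => rfl
  simp only [hrw, Finset.sum_mul]
  rw [Finset.sum_comm]
  have h1 : ∀ y : Fin n → Bool,
      (∑ T : Finset (Fin n), pw n p y * (f y * chi n p T y) * chi n p T x) =
      if y = x then f y else 0 := by
    intro y
    have h2 : (∑ T : Finset (Fin n), pw n p y * (f y * chi n p T y) * chi n p T x) =
        pw n p y * f y * ∑ T : Finset (Fin n), chi n p T y * chi n p T x := by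
      rw [Finset.mul_sum]
      exact Finset.sum_congr rfl fun T _ => by ring
    rw [h2, sum_chi_mul_chi hp0 hp1, mul_ite, mul_zero]
    split_ifs with h
    · field_simp [(pw_pos hp0 hp1 y).ne']
    · rfl
  simp only [h1]
  rw [Finset.sum_ite_eq' Finset.univ x (fun y => f y)]
  simp

lemma triple_moment (hp0 : 0 < p) (hp1 : p < 1) (T T' S : Finset (Fin n)) :
    (∑ x : Fin n → Bool, pw n p x * (chi n p T x * chi n p T' x * chi n p S x)) =
      if T ∆ T' ⊆ S ∧ S ⊆ T ∪ T' then
        ((1 - 2 * p) / Real.sqrt (p * (1 - p))) ^ (S ∩ T ∩ T').card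
      else 0 := by
  -- factor the summand over coordinates
  have hfac : ∀ x : Fin n → Bool,
      pw n p x * (chi n p T x * chi n p T' x * chi n p S x) =
      ∏ i, (wB p (x i) *
        ((if i ∈ T then phiB p (x i) else 1) *
          ((if i ∈ T' then phiB p (x i) else 1) * (if i ∈ S then phiB p (x i) else 1)))) := by
    intro x
    have hT : chi n p T x = ∏ i, (if i ∈ T then phiB p (x i) else 1) := by
      rw [Finset.prod_ite_mem, Finset.univ_inter, chi_eq_prod]
    have hT' : chi n p T' x = ∏ i, (if i ∈ T' then phiB p (x i) else 1) := by
      rw [Finset.prod_ite_mem, Finset.univ_inter, chi_eq_prod]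
    have hS : chi n p S x = ∏ i, (if i ∈ S then phiB p (x i) else 1) := by
      rw [Finset.prod_ite_mem, Finset.univ_inter, chi_eq_prod]
    rw [pw_eq_prod, hT, hT', hS, ← Finset.prod_mul_distrib, ← Finset.prod_mul_distrib,
      ← Finset.prod_mul_distrib]
    exact Finset.prod_congr rfl fun i _ => by ring
  simp only [hfac]
  -- swap sum and product
  rw [← Fintype.piFinset_univ, ← Finset.prod_univ_sum (fun _ => (Finset.univ : Finset Bool))
    (fun i b => wB p b *
      ((if i ∈ T then phiB p b else 1) *
        ((if i ∈ T' then phiB p b else 1) * (if i ∈ S then phiB p b else 1))))]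
  -- evaluate each coordinate factor
  have hcoord : ∀ i : Fin n,
      (∑ b : Bool, wB p b *
        ((if i ∈ T then phiB p b else 1) *
          ((if i ∈ T' then phiB p b else 1) * (if i ∈ S then phiB p b else 1)))) =
      if (i ∈ T ∆ T' ∧ i ∉ S) ∨ (i ∈ S ∧ i ∉ T ∪ T') then 0
      else if i ∈ S ∩ T ∩ T' then (1 - 2 * p) / Real.sqrt (p * (1 - p)) else 1 := by
    intro i
    by_cases hT : i ∈ T <;> by_cases hT' : i ∈ T' <;> by_cases hS : i ∈ S <;>
      simp only [hT, hT', hS, if_true, if_false, mul_one, one_mul,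
        Finset.mem_symmDiff, Finset.mem_union, Finset.mem_inter, not_true, not_false_iff,
        true_and, and_true, false_and, and_false, true_or, or_true, false_or, or_false,
        and_self, or_self, not_false_eq_true, not_true_eq_false, if_true, if_false]
    -- (T,T',S) = (t,t,t)
    · rw [← bit_moment3 hp0 hp1]
      exact Finset.sum_congr rfl fun b _ => by ring
    -- (t,t,f)
    · exact bit_moment2 hp0 hp1
    -- (t,f,t)
    · exact bit_moment2 hp0 hp1
    -- (t,f,f)
    · exact bit_moment1 hp0 hp1
    -- (f,t,t)
    · exact bit_moment2 hp0 hp1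
    -- (f,t,f)
    · exact bit_moment1 hp0 hp1
    -- (f,f,t)
    · exact bit_moment1 hp0 hp1
    -- (f,f,f)
    · exact bit_moment0
  simp only [hcoord]
  by_cases hc : T ∆ T' ⊆ S ∧ S ⊆ T ∪ T'
  · rw [if_pos hc]
    have hno : ∀ i : Fin n, ¬((i ∈ T ∆ T' ∧ i ∉ S) ∨ (i ∈ S ∧ i ∉ T ∪ T')) := by
      rintro i (⟨h1, h2⟩ | ⟨h1, h2⟩)
      · exact h2 (hc.1 h1)
      · exact h2 (hc.2 h1)
    have : ∀ i : Fin n, (if (i ∈ T ∆ T' ∧ i ∉ S) ∨ (i ∈ S ∧ i ∉ T ∪ T') then (0:ℝ)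
        else if i ∈ S ∩ T ∩ T' then (1 - 2 * p) / Real.sqrt (p * (1 - p)) else 1) =
        if i ∈ S ∩ T ∩ T' then (1 - 2 * p) / Real.sqrt (p * (1 - p)) else 1 := fun i =>
      if_neg (hno i)
    simp only [this]
    rw [Finset.prod_ite_mem, Finset.univ_inter, Finset.prod_const]
  · rw [if_neg hc]
    have : ∃ i : Fin n, (i ∈ T ∆ T' ∧ i ∉ S) ∨ (i ∈ S ∧ i ∉ T ∪ T') := by
      by_contra h
      push_neg at h
      exact hc ⟨fun i hi => by
          have := h i; tauto,
        fun i hi => by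
          have := h i; tauto⟩
    obtain ⟨i, hi⟩ := this
    exact Finset.prod_eq_zero (Finset.mem_univ i) (by rw [if_pos hi])

end ProductFourierAux

theorem product_fourier (n : ℕ) (hn : 1 ≤ n) (p : ℝ) (hp0 : 0 < p) (hp1 : p < 1)
    (f g : (Fin n → Bool) → ℝ)
    (hf : ∀ x, f x = 0 ∨ f x = 1) (hg : ∀ x, g x = 0 ∨ g x = 1)
    (S : Finset (Fin n)) :
    binner n p (fun x => f x * g x) (chi n p S) =
      ∑ T : Finset (Fin n), ∑ T' : Finset (Fin n),
        (if T ∆ T' ⊆ S ∧ S ⊆ T ∪ T' then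
          fhat n p f T * fhat n p g T' *
            ((1 - 2 * p) / Real.sqrt (p * (1 - p))) ^ (S ∩ T ∩ T').card
        else 0) := by
  rw [binner_eq_sum]
  have step1 : ∀ x : Fin n → Bool,
      pw n p x * (f x * g x * chi n p S x) =
      ∑ T : Finset (Fin n), ∑ T' : Finset (Fin n),
        fhat n p f T * fhat n p g T' *
          (pw n p x * (chi n p T x * chi n p T' x * chi n p S x)) := by
    intro x
    conv_lhs => rw [fourier_expansion hp0 hp1 f x, fourier_expansion hp0 hp1 g x]
    rw [Finset.sum_mul_sum]
    simp only [Finset.sum_mul, Finset.mul_sum]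
    exact Finset.sum_congr rfl fun T _ => Finset.sum_congr rfl fun T' _ => by ring
  simp only [step1]
  rw [Finset.sum_comm]
  refine Finset.sum_congr rfl fun T _ => ?_
  rw [Finset.sum_comm]
  refine Finset.sum_congr rfl fun T' _ => ?_
  rw [← Finset.mul_sum, triple_moment hp0 hp1 T T' S, mul_ite, mul_zero]
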